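/- Let λ(θ) be the inverse of θ(λ) = -1 + Artanh(√(1-4λ))/√(1-4λ). Then for every a < 2 there exists C > 0 such that λ(θ) ≤ C·exp(-a·θ) for all θ ≥ 1. -/

import Mathlib

open Real Filter Set

noncomputable def artanh (x : ℝ) : ℝ := (1/2) * Real.log ((1+x)/(1-x))

noncomputable def thetaF (l : ℝ) : ℝ := -1 + _root_.artanh (Real.sqrt (1-4*l)) / Real.sqrt (1-4*l)

set_option maxHeartbeats 1600000 in
lemma aux_main (lam : ℝ → ℝ)
    (hmem : ∀ θ > (0:ℝ), lam θ ∈ Set.Ioo (0:ℝ) (1/4))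
    (hinv : ∀ θ > (0:ℝ), thetaF (lam θ) = θ) (a : ℝ) (ha1 : 1 ≤ a) (ha2 : a < 2) :
    ∃ C > (0:ℝ), ∀ θ ≥ (1:ℝ), lam θ ≤ C * Real.exp (-a*θ) := by
  have ha0 : 0 < a := by linarith
  set M : ℝ := 2 / (2 - a) with hM
  have hM0 : 0 < M := div_pos (by norm_num) (by linarith)
  refine ⟨(1/4) * Real.exp (a * M), by positivity, ?_⟩
  intro θ hθ
  have hθ0 : (0:ℝ) < θ := by linarith
  obtain ⟨hl0, hl4⟩ := hmem θ hθ0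
  set l : ℝ := lam θ with hl
  have h14 : 0 < 1 - 4 * l := by linarith
  set s : ℝ := Real.sqrt (1 - 4 * l) with hs
  have hs0 : 0 < s := Real.sqrt_pos.mpr h14
  have hs2 : s ^ 2 = 1 - 4 * l := Real.sq_sqrt h14.le
  have hs1 : s < 1 := by nlinarith [hs2, hs0]
  have h1s : 0 < 1 - s := by linarith
  -- artanh identity
  have hfrac : (1 + s) / (1 - s) = (1 + s) ^ 2 / (4 * l) := by
    rw [div_eq_div_iff (by linarith) (by linarith)]
    nlinarith [hs2]
  have hart : _root_.artanh s = Real.log (1 + s) - (1/2) * Real.log (4 * l) := by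
    unfold _root_.artanh
    rw [hfrac, Real.log_div (by positivity) (by positivity), Real.log_pow]
    push_cast
    ring
  have hθeq : θ + 1 = _root_.artanh s / s := by
    have := hinv θ hθ0
    rw [thetaF] at this
    rw [← hl, ← hs] at this
    linarith [this]
  have hθs : (θ + 1) * s = _root_.artanh s := by
    rw [hθeq, div_mul_cancel₀ _ hs0.ne']
  have hL : Real.log (1 + s) ≤ s := by
    have := Real.log_le_sub_one_of_pos (x := 1 + s) (by linarith)
    linarith
  clear_value M l s
  by_cases hcase : a / 2 ≤ s
  · -- small l case: a*θ ≤ -log(4l)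
    set K : ℝ := -Real.log (4 * l) with hK
    have hK0 : 0 ≤ K := by
      rw [hK, neg_nonneg]
      exact Real.log_nonpos (by linarith) (by linarith)
    have hmul : (θ + 1) * s = Real.log (1 + s) + K / 2 := by
      rw [hθs, hart, hK]; ring
    have key : a * θ ≤ K := by
      have h1 : a * Real.log (1 + s) ≤ a * s := by nlinarith
      have h2 : a * (K / 2) ≤ s * K := by nlinarith
      have h3 : s * (a * (θ + 1)) ≤ s * (a + K) := by nlinarith [hmul]
      have h4 : a * (θ + 1) ≤ a + K := le_of_mul_le_mul_left h3 hs0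
      linarith
    have h4l : 4 * l ≤ Real.exp (-a * θ) := by
      have hlog : Real.log (4 * l) ≤ -a * θ := by rw [hK] at key; linarith
      calc 4 * l = Real.exp (Real.log (4 * l)) := (Real.exp_log (by linarith)).symm
        _ ≤ Real.exp (-a * θ) := Real.exp_le_exp.mpr hlog
    have hC1 : (1:ℝ) ≤ Real.exp (a * M) := Real.one_le_exp (mul_nonneg ha0.le hM0.le)
    have hexp0 : 0 < Real.exp (-a * θ) := Real.exp_pos _
    nlinarith [h4l, hexp0, hC1]
  · -- l near 1/4: θ bounded by M
    push_neg at hcase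
    have hlog2 : -Real.log (1 - s) ≤ s / (1 - s) := by
      have h := Real.log_le_sub_one_of_pos (x := (1 - s)⁻¹) (by positivity)
      rw [Real.log_inv] at h
      have h2 : -Real.log (1 - s) ≤ (1 - s)⁻¹ - 1 := by linarith
      calc -Real.log (1 - s) ≤ (1 - s)⁻¹ - 1 := h2
        _ = s / (1 - s) := by field_simp; ring
    have hartle : _root_.artanh s ≤ (1/2) * (s + s / (1 - s)) := by
      unfold _root_.artanh
      rw [Real.log_div (by linarith) (by linarith)]
      nlinarith [hL, hlog2]
    have hub : (θ + 1) * s ≤ (1/2) * (s + s / (1 - s)) := by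
      rw [hθs]; exact hartle
    have hub2 : (θ + 1) * s * (1 - s) ≤ (1/2) * (s * (1 - s) + s) := by
      have h := mul_le_mul_of_nonneg_right hub h1s.le
      have he : ((1/2) * (s + s / (1 - s))) * (1 - s) = (1/2) * (s * (1 - s) + s) := by
        field_simp
      linarith [he ▸ h]
    have hdiv : (θ + 1) * (1 - s) ≤ (1/2) * ((1 - s) + 1) := by
      have h3 : s * ((θ + 1) * (1 - s)) ≤ s * ((1/2) * ((1 - s) + 1)) := by
        nlinarith [hub2]
      exact le_of_mul_le_mul_left h3 hs0
    have hθM : θ ≤ M := by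
      rw [hM, le_div_iff₀ (by linarith)]
      nlinarith [hdiv, mul_nonneg (by linarith : (0:ℝ) ≤ θ + 1)
        (by linarith : (0:ℝ) ≤ (1 - s) - (2 - a)/2)]
    have hexpθ : Real.exp (a * M) * Real.exp (-a * θ) = Real.exp (a * M - a * θ) := by
      rw [← Real.exp_add]; ring_nf
    have h1le : (1:ℝ) ≤ Real.exp (a * M - a * θ) := Real.one_le_exp (by nlinarith)
    calc l ≤ 1/4 := by linarith
      _ ≤ 1/4 * (Real.exp (a * M) * Real.exp (-a * θ)) := by rw [hexpθ]; nlinarith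
      _ = 1 / 4 * Real.exp (a * M) * Real.exp (-a * θ) := by ring

theorem stmt18 (lam : ℝ → ℝ)
    (hmem : ∀ θ > (0:ℝ), lam θ ∈ Set.Ioo (0:ℝ) (1/4))
    (hinv : ∀ θ > (0:ℝ), thetaF (lam θ) = θ) :
    ∀ a < (2:ℝ), ∃ C > (0:ℝ), ∀ θ ≥ (1:ℝ), lam θ ≤ C * Real.exp (-a*θ) := by
  intro a ha
  obtain ⟨C, hC, h⟩ := aux_main lam hmem hinv (max a 1) (le_max_right _ _)
    (max_lt ha (by norm_num))
  refine ⟨C, hC, fun θ hθ => ?_⟩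
  calc lam θ ≤ C * Real.exp (-(max a 1) * θ) := h θ hθ
    _ ≤ C * Real.exp (-a * θ) := by
        apply mul_le_mul_of_nonneg_left _ hC.le
        apply Real.exp_le_exp.mpr
        have hle : a ≤ max a 1 := le_max_left _ _
        nlinarith [hθ]
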